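/- Let X and Y be compact metric spaces, let ω: ℝ₊ → ℝ₊ be concave and nondecreasing, and let v: X×Y → ℝ satisfy |v(x,y) − v(x',y')| ≤ ω(d(x,x') + d(y,y')) for all x,x' ∈ X and y,y' ∈ Y. Then for all p, p' ∈ Δ(X) and q, q' ∈ Δ(Y) one has |ṽ(p,q) − ṽ(p',q')| ≤ ω(d_KR(p,p') + d_KR(q,q')). -/

import Mathlib

open MeasureTheory Set Filter Topology

noncomputable section
namespace GG

abbrev PM (S : Type*) [MeasurableSpace S] := MeasureTheory.ProbabilityMeasure S

variable {S : Type*} [MeasurableSpace S]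

/-- Dirac probability measure. -/
def dirac (s : S) : PM S := ⟨MeasureTheory.Measure.dirac s, inferInstance⟩

/-- Integral of a function against a probability measure (the affine extension `f̃`). -/
def iPM (f : S → ℝ) (p : PM S) : ℝ := ∫ s, f s ∂(p : MeasureTheory.Measure S)

/-- `r` is the mixture `t p + (1-t) q`. -/
def IsMix (t : NNReal) (p q r : PM S) : Prop :=
  (r : MeasureTheory.Measure S)
    = (t : ENNReal) • (p : MeasureTheory.Measure S)
      + ((1 : ENNReal) - (t : ENNReal)) • (q : MeasureTheory.Measure S)

/-- Convexity of a set of probability measures. -/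
def PMConvex (A : Set (PM S)) : Prop :=
  ∀ p ∈ A, ∀ q ∈ A, ∀ t : NNReal, t ≤ 1 → ∀ r : PM S, IsMix t p q r → r ∈ A

/-- Convexity of a set of pairs of probability measures. -/
def PMConvex2 (A : Set (PM S × PM S)) : Prop :=
  ∀ a ∈ A, ∀ b ∈ A, ∀ t : NNReal, t ≤ 1 → ∀ c : PM S × PM S,
    IsMix t a.1 b.1 c.1 → IsMix t a.2 b.2 c.2 → c ∈ A

/-- Convex hull of a set of probability measures. -/
def convexHullPM (A : Set (PM S)) : Set (PM S) := ⋂₀ {T | A ⊆ T ∧ PMConvex T}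

/-- Convex hull of a set of pairs of probability measures. -/
def convexHull2 (A : Set (PM S × PM S)) : Set (PM S × PM S) := ⋂₀ {T | A ⊆ T ∧ PMConvex2 T}

/-- Kantorovich–Rubinstein distance. -/
def dKR {S : Type*} [MeasurableSpace S] [PseudoMetricSpace S] (p q : PM S) : ℝ :=
  sSup {r | ∃ f : S → ℝ, LipschitzWith 1 f ∧ r = |iPM f p - iPM f q|}

def argmaxOn {α : Type*} (f : α → ℝ) (A : Set α) : Set α := {p ∈ A | ∀ q ∈ A, f q ≤ f p}

def argminOn {α : Type*} (f : α → ℝ) (A : Set α) : Set α := {p ∈ A | ∀ q ∈ A, f p ≤ f q}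

section Topo

variable [TopologicalSpace S] [OpensMeasurableSpace S]

/-- Graph of the linear extension `Γ̃`: the closed convex hull of the graph of `Γ`. -/
def tGraph (Γ : S → Set (PM S)) : Set (PM S × PM S) :=
  closure (convexHull2 {z | ∃ x : S, z.1 = dirac x ∧ z.2 ∈ Γ x})

/-- The linear extension `Γ̃ : Δ(S) ⇉ Δ(S)`. -/
def tStep (Γ : S → Set (PM S)) (p : PM S) : Set (PM S) := {q | (p, q) ∈ tGraph Γ}

/-- Iterates `Γ̃ⁿ`, with `Γ̃⁰(p) = {p}` and `Γ̃^{n+1} = Γ̃ⁿ ∘ Γ̃`. -/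
def tIter (Γ : S → Set (PM S)) : ℕ → PM S → Set (PM S)
  | 0, p => {p}
  | n + 1, p => {r | ∃ q ∈ tStep Γ p, r ∈ tIter Γ n q}

/-- The reachable set `Γ^∞(x)`: closure of `⋃ₙ Γ̃ⁿ(δ_x)`. -/
def reach (Γ : S → Set (PM S)) (x : S) : Set (PM S) :=
  closure (⋃ n : ℕ, tIter Γ n (dirac x))

/-- There is a bounded measurable lower semicontinuous `φ` whose (expectation) argmax over
`R x` is exactly `{δ_x}`, for every `x`. -/
def AcyclicFor (R : S → Set (PM S)) : Prop :=
  ∃ φ : S → ℝ, Measurable φ ∧ (∃ C : ℝ, ∀ s, |φ s| ≤ C) ∧ LowerSemicontinuous φ ∧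
    ∀ x : S, argmaxOn (iPM φ) (R x) = {dirac x}

/-- There is a bounded measurable upper semicontinuous `ψ` whose (expectation) argmin over
`R y` is exactly `{δ_y}`, for every `y`. -/
def AcyclicForMin (R : S → Set (PM S)) : Prop :=
  ∃ ψ : S → ℝ, Measurable ψ ∧ (∃ C : ℝ, ∀ s, |ψ s| ≤ C) ∧ UpperSemicontinuous ψ ∧
    ∀ y : S, argminOn (iPM ψ) (R y) = {dirac y}

end Topo

section TwoPlayers

variable {X Y : Type*} [MeasurableSpace X] [MeasurableSpace Y]

/-- The bi-affine extension `ṽ(p,q) = ∫∫ v dp dq`. -/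
def iXY (v : X × Y → ℝ) (p : PM X) (q : PM Y) : ℝ :=
  ∫ x, ∫ y, v (x, y) ∂(q : MeasureTheory.Measure Y) ∂(p : MeasureTheory.Measure X)

/-- `v` is excessive: `v(x,y) = max_{p ∈ Γ(x)} ṽ(p,y)`. -/
def Excessive (Γ : X → Set (PM X)) (v : X × Y → ℝ) : Prop :=
  ∀ x : X, ∀ y : Y, IsGreatest ((fun p => iXY v p (dirac y)) '' Γ x) (v (x, y))

/-- `v` is depressive: `v(x,y) = min_{q ∈ Λ(y)} ṽ(x,q)`. -/
def Depressive (Λ : Y → Set (PM Y)) (v : X × Y → ℝ) : Prop :=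
  ∀ x : X, ∀ y : Y, IsLeast ((fun q => iXY v (dirac x) q) '' Λ y) (v (x, y))

/-- `v` is balanced: `v(x,y) = max_{p ∈ Γ(x)} min_{q ∈ Λ(y)} ṽ(p,q)
    = min_{q ∈ Λ(y)} max_{p ∈ Γ(x)} ṽ(p,q)`. -/
def Balanced (Γ : X → Set (PM X)) (Λ : Y → Set (PM Y)) (v : X × Y → ℝ) : Prop :=
  ∀ x : X, ∀ y : Y,
    IsGreatest {r | ∃ p ∈ Γ x, IsLeast (iXY v p '' Λ y) r} (v (x, y)) ∧
    IsLeast {r | ∃ q ∈ Λ y, IsGreatest ((fun p => iXY v p q) '' Γ x) r} (v (x, y))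

variable [TopologicalSpace X] [OpensMeasurableSpace X] [TopologicalSpace Y] [OpensMeasurableSpace Y]

/-- Property P1: for all `(x,y)` there is `p ∈ Γ^∞(x)` with `v(x,y) = ṽ(p,y) ≤ ũ(p,y)`. -/
def P1 (Γ : X → Set (PM X)) (u v : X × Y → ℝ) : Prop :=
  ∀ x : X, ∀ y : Y, ∃ p ∈ reach Γ x,
    v (x, y) = iXY v p (dirac y) ∧ iXY v p (dirac y) ≤ iXY u p (dirac y)

/-- Property P2: for all `(x,y)` there is `q ∈ Λ^∞(y)` with `v(x,y) = ṽ(x,q) ≥ ũ(x,q)`. -/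
def P2 (Λ : Y → Set (PM Y)) (u v : X × Y → ℝ) : Prop :=
  ∀ x : X, ∀ y : Y, ∃ q ∈ reach Λ y,
    v (x, y) = iXY v (dirac x) q ∧ iXY u (dirac x) q ≤ iXY v (dirac x) q

/-- `w` satisfies the Shapley fixed point equation for discount factor `lam`:
`w(x,y) = max_{p∈Γ(x)} min_{q∈Λ(y)} (λ u(x,y) + (1-λ) w̃(p,q))
        = min_{q∈Λ(y)} max_{p∈Γ(x)} (λ u(x,y) + (1-λ) w̃(p,q))`. -/
def ShapleyEq (Γ : X → Set (PM X)) (Λ : Y → Set (PM Y)) (u : X × Y → ℝ)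
    (lam : ℝ) (w : X × Y → ℝ) : Prop :=
  ∀ x : X, ∀ y : Y,
    IsGreatest {r | ∃ p ∈ Γ x,
      IsLeast ((fun q => lam * u (x, y) + (1 - lam) * iXY w p q) '' Λ y) r} (w (x, y)) ∧
    IsLeast {r | ∃ q ∈ Λ y,
      IsGreatest ((fun p => lam * u (x, y) + (1 - lam) * iXY w p q) '' Γ x) r} (w (x, y))

end TwoPlayers

/-- A standard gambling game: compact metric state spaces, continuous payoff,
continuous transition multifunctions with nonempty convex compact values,
leavable and non expansive. -/
structure StdGame (X Y : Type*) [MetricSpace X] [MeasurableSpace X] [OpensMeasurableSpace X]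
    [MetricSpace Y] [MeasurableSpace Y] [OpensMeasurableSpace Y] where
  G : X → Set (PM X)
  L : Y → Set (PM Y)
  u : X × Y → ℝ
  u_cont : Continuous u
  G_ne : ∀ x, (G x).Nonempty
  G_cvx : ∀ x, PMConvex (G x)
  G_cpt : ∀ x, IsCompact (G x)
  G_cont : ∀ ε : ℝ, 0 < ε → ∃ α : ℝ, 0 < α ∧ ∀ x x' : X, dist x x' ≤ α →
    ∀ p ∈ G x, ∃ p' ∈ G x', dKR p p' ≤ ε
  G_leav : ∀ x, dirac x ∈ G x
  G_nonexp : ∀ x x' : X, ∀ p ∈ G x, ∃ p' ∈ G x', dKR p p' ≤ dist x x'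
  L_ne : ∀ y, (L y).Nonempty
  L_cvx : ∀ y, PMConvex (L y)
  L_cpt : ∀ y, IsCompact (L y)
  L_cont : ∀ ε : ℝ, 0 < ε → ∃ α : ℝ, 0 < α ∧ ∀ y y' : Y, dist y y' ≤ α →
    ∀ q ∈ L y, ∃ q' ∈ L y', dKR q q' ≤ ε
  L_leav : ∀ y, dirac y ∈ L y
  L_nonexp : ∀ y y' : Y, ∀ q ∈ L y, ∃ q' ∈ L y', dKR q q' ≤ dist y y'

end GG

namespace GG

section Helpers
set_option linter.unusedSectionVars false
variable {S : Type*} [MetricSpace S] [CompactSpace S] [Nonempty S]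
  [MeasurableSpace S] [BorelSpace S]

lemma cont_integrable (f : S → ℝ) (hf : Continuous f) (p : PM S) :
    Integrable f (p : Measure S) := by
  obtain ⟨C, hC⟩ := isCompact_univ.exists_bound_of_continuousOn hf.continuousOn
  exact (integrable_const C).mono' hf.measurable.aestronglyMeasurable
    (ae_of_all _ fun s => hC s trivial)

lemma dKR_bddAbove (p q : PM S) :
    BddAbove {r | ∃ f : S → ℝ, LipschitzWith 1 f ∧ r = |iPM f p - iPM f q|} := by
  obtain ⟨s₀⟩ := ‹Nonempty S›
  refine ⟨2 * Metric.diam (Set.univ : Set S), ?_⟩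
  rintro r ⟨f, hf, rfl⟩
  have key : ∀ μ : PM S, |iPM f μ - f s₀| ≤ Metric.diam (Set.univ : Set S) := by
    intro μ
    have hint : Integrable f (μ : Measure S) := cont_integrable f hf.continuous μ
    have h1 : iPM f μ - f s₀ = ∫ s, (f s - f s₀) ∂(μ : Measure S) := by
      rw [integral_sub hint (integrable_const _), integral_const]
      simp [iPM]
    rw [h1]
    calc |∫ s, (f s - f s₀) ∂(μ : Measure S)|
        ≤ ∫ s, |f s - f s₀| ∂(μ : Measure S) := by
          simpa [Real.norm_eq_abs] using
            norm_integral_le_integral_norm (μ := (μ : Measure S)) (fun s => f s - f s₀)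
      _ ≤ ∫ _s, Metric.diam (Set.univ : Set S) ∂(μ : Measure S) := by
          apply integral_mono (hint.sub (integrable_const _)).abs (integrable_const _)
          intro s
          calc |f s - f s₀| = dist (f s) (f s₀) := (Real.dist_eq _ _).symm
            _ ≤ 1 * dist s s₀ := hf.dist_le_mul s s₀
            _ ≤ Metric.diam (Set.univ : Set S) := by
                rw [one_mul]
                exact Metric.dist_le_diam_of_mem isCompact_univ.isBounded trivial trivial
      _ = Metric.diam (Set.univ : Set S) := by simp
  have h := abs_sub_le (iPM f p) (f s₀) (iPM f q)
  rw [abs_sub_comm (f s₀) (iPM f q)] at h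
  linarith [key p, key q]

lemma dKR_nonneg (p q : PM S) : 0 ≤ dKR p q := by
  apply le_csSup (dKR_bddAbove p q)
  exact ⟨fun _ => 0, LipschitzWith.const' 0, by simp [iPM]⟩

lemma iPM_lip_bound {k : ℝ} (hk : 0 ≤ k) (f : S → ℝ)
    (hf : ∀ a b, |f a - f b| ≤ k * dist a b) (p q : PM S) :
    |iPM f p - iPM f q| ≤ k * dKR p q := by
  rcases eq_or_lt_of_le hk with hk0 | hkpos
  · have hconst : ∀ a, f a = f (Classical.arbitrary S) := by
      intro a
      have h2 := hf a (Classical.arbitrary S)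
      rw [← hk0, zero_mul] at h2
      exact sub_eq_zero.mp (abs_eq_zero.mp (le_antisymm h2 (abs_nonneg _)))
    have : iPM f p = iPM f q := by
      have hp : iPM f p = f (Classical.arbitrary S) := by
        simp only [iPM]
        rw [show f = fun _ => f (Classical.arbitrary S) from funext hconst]
        simp
      have hq : iPM f q = f (Classical.arbitrary S) := by
        simp only [iPM]
        rw [show f = fun _ => f (Classical.arbitrary S) from funext hconst]
        simp
      rw [hp, hq]
    rw [this, sub_self, abs_zero, ← hk0, zero_mul]
  · set g : S → ℝ := fun s => k⁻¹ * f s with hg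
    have hglip : LipschitzWith 1 g := by
      apply LipschitzWith.of_dist_le_mul
      intro a b
      rw [NNReal.coe_one, one_mul, Real.dist_eq]
      have : g a - g b = k⁻¹ * (f a - f b) := by ring
      rw [this, abs_mul, abs_of_pos (inv_pos.mpr hkpos)]
      calc k⁻¹ * |f a - f b| ≤ k⁻¹ * (k * dist a b) := by
            exact mul_le_mul_of_nonneg_left (hf a b) (le_of_lt (inv_pos.mpr hkpos))
        _ = dist a b := by field_simp
    have hfg : ∀ μ : PM S, iPM f μ = k * iPM g μ := by
      intro μ
      simp only [iPM, hg, integral_const_mul]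
      rw [← mul_assoc, mul_inv_cancel₀ (ne_of_gt hkpos), one_mul]
    rw [hfg p, hfg q, ← mul_sub, abs_mul, abs_of_pos hkpos]
    exact mul_le_mul_of_nonneg_left
      (le_csSup (dKR_bddAbove p q) ⟨g, hglip, rfl⟩) hk

lemma dKR_eq_zero_imp {p q : PM S} (h : dKR p q = 0) : p = q := by
  have hint : ∀ (K : NNReal) (f : S → ℝ), LipschitzWith K f → iPM f p = iPM f q := by
    intro K f hf
    have hd : ∀ a b, |f a - f b| ≤ (K : ℝ) * dist a b := by
      intro a b; rw [← Real.dist_eq]; exact hf.dist_le_mul a b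
    have := iPM_lip_bound (K.coe_nonneg) f hd p q
    rw [h, mul_zero] at this
    have := le_antisymm this (abs_nonneg _)
    linarith [abs_nonneg (iPM f p - iPM f q), sub_eq_zero.mp (abs_eq_zero.mp this)]
  have hclosed : ∀ F : Set S, IsClosed F → (p : Measure S) F = (q : Measure S) F := by
    intro F hF
    rcases F.eq_empty_or_nonempty with rfl | hFne
    · simp
    set fn : ℕ → S → ℝ := fun n x => max (1 - n * Metric.infDist x F) 0 with hfn
    have hlip : ∀ n : ℕ, LipschitzWith n (fn n) := by
      intro n
      have h1 : LipschitzWith n (fun x => 1 - n * Metric.infDist x F) := by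
        apply LipschitzWith.of_dist_le_mul
        intro a b
        rw [Real.dist_eq]
        have : (1 - n * Metric.infDist a F) - (1 - n * Metric.infDist b F)
            = -(n * (Metric.infDist a F - Metric.infDist b F)) := by ring
        rw [this, abs_neg, abs_mul, abs_of_nonneg (by positivity : (0:ℝ) ≤ (n:ℝ))]
        apply mul_le_mul_of_nonneg_left _ (by positivity : (0:ℝ) ≤ (n:ℝ))
        rw [← Real.dist_eq]
        simpa using (Metric.lipschitz_infDist_pt F).dist_le_mul a b
      have := h1.max ((LipschitzWith.const' (0:ℝ)).weaken (zero_le : (0:NNReal) ≤ (n : NNReal)))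
      simpa using this
    have hmeas_fn : ∀ n, Measurable (fn n) := fun n => (hlip n).continuous.measurable
    have hbd : ∀ n, ∀ x, ‖fn n x‖ ≤ 1 := by
      intro n x
      rw [Real.norm_eq_abs, abs_of_nonneg (le_max_right _ _)]
      apply max_le _ zero_le_one
      have : 0 ≤ (n : ℝ) * Metric.infDist x F :=
        mul_nonneg (Nat.cast_nonneg n) Metric.infDist_nonneg
      linarith
    have htend : ∀ x, Tendsto (fun n => fn n x) atTop (𝓝 (F.indicator (fun _ => (1:ℝ)) x)) := by
      intro x
      by_cases hx : x ∈ F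
      · have : ∀ n, fn n x = 1 := by
          intro n
          simp [hfn, Metric.infDist_zero_of_mem hx]
        rw [Set.indicator_of_mem hx]
        simp only [this]
        exact tendsto_const_nhds
      · have hpos : 0 < Metric.infDist x F :=
          (hF.notMem_iff_infDist_pos hFne).mp hx
        rw [Set.indicator_of_notMem hx]
        have : ∀ᶠ n : ℕ in atTop, fn n x = 0 := by
          filter_upwards [eventually_ge_atTop (Nat.ceil (Metric.infDist x F)⁻¹)] with n hn
          have h1 : (Metric.infDist x F)⁻¹ ≤ (n : ℝ) := by
            calc (Metric.infDist x F)⁻¹ ≤ (Nat.ceil (Metric.infDist x F)⁻¹ : ℝ) :=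
                  Nat.le_ceil _
              _ ≤ n := by exact_mod_cast hn
          have : (1:ℝ) ≤ n * Metric.infDist x F := by
            rw [← inv_mul_cancel₀ (ne_of_gt hpos)]
            exact mul_le_mul_of_nonneg_right h1 (le_of_lt hpos)
          simp only [hfn]
          rw [max_eq_right]; linarith
        exact Tendsto.congr' (this.mono fun n hn => hn.symm) tendsto_const_nhds
    have hdom : ∀ μ : PM S, Tendsto (fun n => ∫ x, fn n x ∂(μ : Measure S)) atTop
        (𝓝 (∫ x, F.indicator (fun _ => (1:ℝ)) x ∂(μ : Measure S))) := by
      intro μ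
      apply tendsto_integral_of_dominated_convergence (fun _ => (1:ℝ))
        (fun n => (hmeas_fn n).aestronglyMeasurable) (integrable_const 1)
        (fun n => ae_of_all _ (hbd n)) (ae_of_all _ htend)
    have heqn : ∀ n, ∫ x, fn n x ∂(p : Measure S) = ∫ x, fn n x ∂(q : Measure S) :=
      fun n => hint n (fn n) (hlip n)
    have hlim := tendsto_nhds_unique ((hdom p).congr (fun n => heqn n)) (hdom q)
    have hip : ∫ x, F.indicator (fun _ => (1:ℝ)) x ∂(p : Measure S)
        = ((p : Measure S) F).toReal := by
      rw [integral_indicator_const _ hF.measurableSet]; simp; rfl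
    have hiq : ∫ x, F.indicator (fun _ => (1:ℝ)) x ∂(q : Measure S)
        = ((q : Measure S) F).toReal := by
      rw [integral_indicator_const _ hF.measurableSet]; simp; rfl
    rw [hip, hiq] at hlim
    exact (ENNReal.toReal_eq_toReal_iff' (measure_ne_top _ _) (measure_ne_top _ _)).mp hlim
  apply ProbabilityMeasure.toMeasure_injective
  apply ext_of_generate_finite _ ?_ isPiSystem_isClosed
    (fun F hF => hclosed F hF) (hclosed _ isClosed_univ)
  rw [BorelSpace.measurable_eq (α := S), borel_eq_generateFrom_isClosed]

end Helpers


/-- if a bounded measurable function v on X x Y admits a concave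
nondecreasing modulus of continuity omega, then its bi-affine extension admits the same
modulus with respect to the Kantorovich-Rubinstein distances. -/
theorem statement1
    {X Y : Type*} [MetricSpace X] [CompactSpace X] [Nonempty X]
    [MeasurableSpace X] [BorelSpace X]
    [MetricSpace Y] [CompactSpace Y] [Nonempty Y]
    [MeasurableSpace Y] [BorelSpace Y]
    (ω : ℝ → ℝ)
    (hconc : ConcaveOn ℝ (Set.Ici 0) ω)
    (hmono : MonotoneOn ω (Set.Ici 0))
    (v : X × Y → ℝ) (hvmeas : Measurable v)
    (hmod : ∀ x x' : X, ∀ y y' : Y,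
      |v (x, y) - v (x', y')| ≤ ω (dist x x' + dist y y'))
    (p p' : PM X) (q q' : PM Y) :
    |iXY v p q - iXY v p' q'| ≤ ω (dKR p p' + dKR q q') := by
  obtain ⟨x₀⟩ := ‹Nonempty X›
  obtain ⟨y₀⟩ := ‹Nonempty Y›
  have hω0 : 0 ≤ ω 0 := by have h := hmod x₀ x₀ y₀ y₀; simpa using h
  have hpnn : 0 ≤ dKR p p' := dKR_nonneg p p'
  have hqnn : 0 ≤ dKR q q' := dKR_nonneg q q'
  set D := dKR p p' + dKR q q' with hD
  have hDnn : 0 ≤ D := by linarith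
  rcases eq_or_lt_of_le hDnn with hD0 | hDpos
  · -- degenerate case: both distances vanish
    have hp0 : dKR p p' = 0 := by linarith
    have hq0 : dKR q q' = 0 := by linarith
    obtain rfl : p = p' := dKR_eq_zero_imp hp0
    obtain rfl : q = q' := dKR_eq_zero_imp hq0
    rw [sub_self, abs_zero, hD, hp0, hq0]
    simpa using hω0
  · -- main case
    set A := (fun t => (ω D - ω t) / (D - t)) '' (Set.Ico 0 D) with hA
    have hAne : A.Nonempty := ⟨_, ⟨0, ⟨le_refl 0, hDpos⟩, rfl⟩⟩
    have hAlb : ∀ r ∈ A, 0 ≤ r := by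
      rintro r ⟨t, ⟨ht0, htD⟩, rfl⟩
      apply div_nonneg _ (by linarith)
      have := hmono ht0 hDnn htD.le
      linarith
    set k := sInf A with hk
    have hAbdd : BddBelow A := ⟨0, hAlb⟩
    have hk0 : 0 ≤ k := le_csInf hAne hAlb
    have hlin : ∀ t, 0 ≤ t → ω t ≤ ω D + k * (t - D) := by
      intro t ht
      rcases lt_trichotomy t D with hlt | heq | hgt
      · have hsl : k ≤ (ω D - ω t) / (D - t) := csInf_le hAbdd ⟨t, ⟨ht, hlt⟩, rfl⟩
        have hDt : (0:ℝ) < D - t := by linarith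
        rw [le_div_iff₀ hDt] at hsl
        nlinarith
      · rw [heq]; simp
      · have hsl : (ω t - ω D) / (t - D) ≤ k := by
          apply le_csInf hAne
          rintro r ⟨t', ⟨ht'0, ht'D⟩, rfl⟩
          exact hconc.slope_anti_adjacent ht'0 ht ht'D hgt
        have htD : (0:ℝ) < t - D := by linarith
        rw [div_le_iff₀ htD] at hsl
        nlinarith
    set c := ω D - k * D with hc
    have hωlin : ∀ t, 0 ≤ t → ω t ≤ c + k * t := by
      intro t ht
      have h1 := hlin t ht
      have h2 : ω D + k * (t - D) = c + k * t := by rw [hc]; ring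
      linarith
    have hc0 : 0 ≤ c := by have := hωlin 0 le_rfl; simp at this; linarith
    have hv2 : ∀ z z' : X × Y, |v z - v z'| ≤ c + k * dist z.1 z'.1 + k * dist z.2 z'.2 := by
      rintro ⟨x, y⟩ ⟨x', y'⟩
      have h1 := hmod x x' y y'
      have h2 := hωlin (dist x x' + dist y y') (by positivity)
      have h3 : c + k * (dist x x' + dist y y') = c + k * dist x x' + k * dist y y' := by ring
      simp only []
      linarith
    -- the inf-convolution regularization
    set w : X × Y → ℝ :=
      fun z => sInf (Set.range fun z' : X × Y => v z' + k * dist z.1 z'.1 + k * dist z.2 z'.2)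
      with hwdef
    have hbb : ∀ z z' : X × Y, v z - c ≤ v z' + k * dist z.1 z'.1 + k * dist z.2 z'.2 := by
      intro z z'
      have h := (abs_le.mp (hv2 z z')).2
      linarith
    have hwbdd : ∀ z : X × Y,
        BddBelow (Set.range fun z' : X × Y => v z' + k * dist z.1 z'.1 + k * dist z.2 z'.2) :=
      fun z => ⟨v z - c, by rintro r ⟨z', rfl⟩; exact hbb z z'⟩
    have hwle : ∀ z, w z ≤ v z := by
      intro z
      have := csInf_le (hwbdd z) ⟨z, rfl⟩
      simpa using this
    have hwge : ∀ z, v z - c ≤ w z :=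
      fun z => le_csInf ⟨_, ⟨z, rfl⟩⟩ (by rintro r ⟨z', rfl⟩; exact hbb z z')
    have hwlip1 : ∀ z₁ z₂ : X × Y, w z₁ ≤ w z₂ + k * dist z₁.1 z₂.1 + k * dist z₁.2 z₂.2 := by
      intro z₁ z₂
      have hstep : ∀ z' : X × Y,
          w z₁ - k * dist z₁.1 z₂.1 - k * dist z₁.2 z₂.2
            ≤ v z' + k * dist z₂.1 z'.1 + k * dist z₂.2 z'.2 := by
        intro z'
        have h1 : w z₁ ≤ v z' + k * dist z₁.1 z'.1 + k * dist z₁.2 z'.2 :=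
          csInf_le (hwbdd z₁) ⟨z', rfl⟩
        have h2 := dist_triangle z₁.1 z₂.1 z'.1
        have h3 := dist_triangle z₁.2 z₂.2 z'.2
        nlinarith [mul_le_mul_of_nonneg_left h2 hk0, mul_le_mul_of_nonneg_left h3 hk0]
      have := le_csInf (⟨_, ⟨z₂, rfl⟩⟩ :
        (Set.range fun z' : X × Y => v z' + k * dist z₂.1 z'.1 + k * dist z₂.2 z'.2).Nonempty)
        (by rintro r ⟨z', rfl⟩; exact hstep z')
      linarith
    have hwd : ∀ z₁ z₂ : X × Y, |w z₁ - w z₂| ≤ k * dist z₁.1 z₂.1 + k * dist z₁.2 z₂.2 := by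
      intro z₁ z₂
      rw [abs_sub_le_iff]
      constructor
      · have := hwlip1 z₁ z₂; linarith
      · have := hwlip1 z₂ z₁
        rw [dist_comm z₂.1 z₁.1, dist_comm z₂.2 z₁.2] at this
        linarith
    have hwcont : Continuous w := by
      refine (LipschitzWith.of_dist_le_mul (K := Real.toNNReal (2 * k)) ?_).continuous
      intro a b
      rw [Real.coe_toNNReal _ (by positivity), Real.dist_eq]
      have h1 : dist a.1 b.1 ≤ dist a b := by rw [Prod.dist_eq]; exact le_max_left _ _
      have h2 : dist a.2 b.2 ≤ dist a b := by rw [Prod.dist_eq]; exact le_max_right _ _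
      have := hwd a b
      nlinarith [mul_le_mul_of_nonneg_left h1 hk0, mul_le_mul_of_nonneg_left h2 hk0]
    have hwmeas : Measurable w := hwcont.measurable
    -- boundedness of v
    have hvb : ∀ z : X × Y, |v z| ≤ |v (x₀, y₀)| +
        (c + k * Metric.diam (univ : Set X) + k * Metric.diam (univ : Set Y)) := by
      intro z
      have h := hv2 z (x₀, y₀)
      have hdx : dist z.1 x₀ ≤ Metric.diam (univ : Set X) :=
        Metric.dist_le_diam_of_mem isCompact_univ.isBounded trivial trivial
      have hdy : dist z.2 y₀ ≤ Metric.diam (univ : Set Y) :=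
        Metric.dist_le_diam_of_mem isCompact_univ.isBounded trivial trivial
      have h4 : |v z| ≤ |v z - v (x₀, y₀)| + |v (x₀, y₀)| := by
        calc |v z| = |(v z - v (x₀, y₀)) + v (x₀, y₀)| := by ring_nf
          _ ≤ |v z - v (x₀, y₀)| + |v (x₀, y₀)| := abs_add_le _ _
      nlinarith [mul_le_mul_of_nonneg_left hdx hk0, mul_le_mul_of_nonneg_left hdy hk0]
    set Cv := |v (x₀, y₀)| +
        (c + k * Metric.diam (univ : Set X) + k * Metric.diam (univ : Set Y)) with hCv
    -- integrability facts
    have hvint : ∀ (x : X) (m : PM Y), Integrable (fun y => v (x, y)) (m : Measure Y) := by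
      intro x m
      exact (integrable_const Cv).mono'
        (hvmeas.comp measurable_prodMk_left).aestronglyMeasurable
        (ae_of_all _ fun y => by simpa [Real.norm_eq_abs] using hvb (x, y))
    have hwintY : ∀ (x : X) (m : PM Y), Integrable (fun y => w (x, y)) (m : Measure Y) :=
      fun x m => cont_integrable _ (hwcont.comp (Continuous.prodMk_right x)) m
    set u : X × Y → ℝ := fun z => v z - w z with hu
    have hu0 : ∀ z, 0 ≤ u z := fun z => by have := hwle z; simp only [hu]; linarith
    have huc : ∀ z, u z ≤ c := fun z => by have := hwge z; simp only [hu]; linarith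
    have humeas : Measurable u := hvmeas.sub hwmeas
    have huint : ∀ (x : X) (m : PM Y), Integrable (fun y => u (x, y)) (m : Measure Y) :=
      fun x m => (hvint x m).sub (hwintY x m)
    have hinner_u : ∀ (x : X) (m : PM Y), (∫ y, u (x, y) ∂(m : Measure Y)) ∈ Set.Icc 0 c := by
      intro x m
      constructor
      · exact integral_nonneg fun y => hu0 (x, y)
      · calc ∫ y, u (x, y) ∂(m : Measure Y) ≤ ∫ _y, c ∂(m : Measure Y) :=
              integral_mono (huint x m) (integrable_const c) (fun y => huc (x, y))
          _ = c := by simp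
    have hUmeas : ∀ m : PM Y, Measurable fun x => ∫ y, u (x, y) ∂(m : Measure Y) := by
      intro m
      exact (humeas.stronglyMeasurable.integral_prod_right').measurable
    have hUint : ∀ (m : PM Y) (mp : PM X),
        Integrable (fun x => ∫ y, u (x, y) ∂(m : Measure Y)) (mp : Measure X) := by
      intro m mp
      refine (integrable_const c).mono' (hUmeas m).aestronglyMeasurable (ae_of_all _ fun x => ?_)
      rw [Real.norm_eq_abs, abs_of_nonneg (hinner_u x m).1]
      exact (hinner_u x m).2
    have hiu : ∀ (mp : PM X) (m : PM Y), iXY u mp m ∈ Set.Icc 0 c := by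
      intro mp m
      constructor
      · exact integral_nonneg fun x => (hinner_u x m).1
      · calc iXY u mp m ≤ ∫ _x, c ∂(mp : Measure X) :=
              integral_mono (hUint m mp) (integrable_const c) (fun x => (hinner_u x m).2)
          _ = c := by simp
    -- Lipschitz properties of the w-integrals
    have hW : ∀ (m : PM Y) (x1 x2 : X),
        |(∫ y, w (x1, y) ∂(m : Measure Y)) - ∫ y, w (x2, y) ∂(m : Measure Y)| ≤ k * dist x1 x2 := by
      intro m x1 x2
      rw [← integral_sub (hwintY x1 m) (hwintY x2 m)]
      calc |∫ y, (w (x1, y) - w (x2, y)) ∂(m : Measure Y)|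
          ≤ ∫ y, |w (x1, y) - w (x2, y)| ∂(m : Measure Y) := by
            simpa [Real.norm_eq_abs] using
              norm_integral_le_integral_norm (μ := (m : Measure Y))
                (fun y => w (x1, y) - w (x2, y))
        _ ≤ ∫ _y, k * dist x1 x2 ∂(m : Measure Y) :=
            integral_mono ((hwintY x1 m).sub (hwintY x2 m)).abs (integrable_const _)
              (fun y => by have := hwd (x1, y) (x2, y); simpa using this)
        _ = k * dist x1 x2 := by simp
    have hWcont : ∀ m : PM Y, Continuous fun x => ∫ y, w (x, y) ∂(m : Measure Y) := by
      intro m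
      refine (LipschitzWith.of_dist_le_mul (K := Real.toNNReal k) ?_).continuous
      intro a b
      rw [Real.coe_toNNReal _ hk0, Real.dist_eq]
      exact hW m a b
    have hWint : ∀ (m : PM Y) (mp : PM X),
        Integrable (fun x => ∫ y, w (x, y) ∂(m : Measure Y)) (mp : Measure X) :=
      fun m mp => cont_integrable _ (hWcont m) mp
    -- splitting
    have hsplit : ∀ (mp : PM X) (m : PM Y), iXY v mp m = iXY u mp m + iXY w mp m := by
      intro mp m
      show (∫ x, ∫ y, v (x, y) ∂(m : Measure Y) ∂(mp : Measure X)) = _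
      rw [show (iXY u mp m + iXY w mp m)
          = ∫ x, ((∫ y, u (x, y) ∂(m : Measure Y)) + ∫ y, w (x, y) ∂(m : Measure Y))
              ∂(mp : Measure X) from (integral_add (hUint m mp) (hWint m mp)).symm]
      congr 1
      funext x
      rw [← integral_add (huint x m) (hwintY x m)]
      congr 1
      funext y
      simp [hu]
    -- the three estimates
    have habs_u : |iXY u p q - iXY u p' q'| ≤ c := by
      have h1 := hiu p q
      have h2 := hiu p' q'
      rw [abs_sub_le_iff]
      constructor
      · linarith [h1.2, h2.1]
      · linarith [h2.2, h1.1]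
    have hw1 : |iXY w p q - iXY w p' q| ≤ k * dKR p p' :=
      iPM_lip_bound hk0 (fun x => ∫ y, w (x, y) ∂(q : Measure Y)) (hW q) p p'
    have hw2 : |iXY w p' q - iXY w p' q'| ≤ k * dKR q q' := by
      have heq : iXY w p' q - iXY w p' q'
          = ∫ x, ((∫ y, w (x, y) ∂(q : Measure Y)) - ∫ y, w (x, y) ∂(q' : Measure Y))
              ∂(p' : Measure X) := by
        rw [integral_sub (hWint q p') (hWint q' p')]
        rfl
      rw [heq]
      have hpt : ∀ x : X,
          |(∫ y, w (x, y) ∂(q : Measure Y)) - ∫ y, w (x, y) ∂(q' : Measure Y)| ≤ k * dKR q q' := by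
        intro x
        apply iPM_lip_bound hk0 (fun y => w (x, y)) _ q q'
        intro a b
        have := hwd (x, a) (x, b)
        simpa using this
      calc |∫ x, ((∫ y, w (x, y) ∂(q : Measure Y)) - ∫ y, w (x, y) ∂(q' : Measure Y))
              ∂(p' : Measure X)|
          ≤ ∫ x, |(∫ y, w (x, y) ∂(q : Measure Y)) - ∫ y, w (x, y) ∂(q' : Measure Y)|
              ∂(p' : Measure X) := by
            simpa [Real.norm_eq_abs] using
              norm_integral_le_integral_norm (μ := (p' : Measure X))
                (fun x => (∫ y, w (x, y) ∂(q : Measure Y)) - ∫ y, w (x, y) ∂(q' : Measure Y))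
        _ ≤ ∫ _x, k * dKR q q' ∂(p' : Measure X) :=
            integral_mono ((hWint q p').sub (hWint q' p')).abs (integrable_const _)
              (fun x => hpt x)
        _ = k * dKR q q' := by simp
    -- conclusion
    have hfinal : ω D = c + k * D := by rw [hc]; ring
    have hdecomp : iXY v p q - iXY v p' q'
        = (iXY u p q - iXY u p' q') + (iXY w p q - iXY w p' q) + (iXY w p' q - iXY w p' q') := by
      rw [hsplit p q, hsplit p' q']
      ring
    calc |iXY v p q - iXY v p' q'|
        ≤ |iXY u p q - iXY u p' q'| + |iXY w p q - iXY w p' q| + |iXY w p' q - iXY w p' q'| := by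
          rw [hdecomp]
          exact (abs_add_le _ _).trans (add_le_add_left (abs_add_le _ _) _)
      _ ≤ ω D := by rw [hfinal, hD]; linarith


end GG
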